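/- Let I be an ideal (in our sense) on a countably infinite set X, and let B ⊆ X be a set whose complement lies in I (i.e., X∖B ∈ I). Then there exists a function f : X → X such that f[B] = X and f ∈ C_I^{(1)}, i.e., f[A] ∈ I for every A ∈ I. -/

import Mathlib

/-- The set of all finitary operations on `X`: an element of arity index `n`
is an `(n+1)`-ary operation, so that all arities are `≥ 1`. -/
abbrev Ops (X : Type) : Type := Σ n : ℕ, (Fin (n + 1) → X) → X

/-- `opImage f A` is the image `f[A^n]` of the `n`-th power of `A` under the
`n`-ary operation `f`. -/
def opImage {X : Type} (f : Ops X) (A : Set X) : Set X :=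
  f.2 '' {x | ∀ i, x i ∈ A}

/-- An ideal "in our sense": closed under subsets and finite unions, contains all
finite sets, contains at least one infinite set, and does not contain `X`. -/
def IsIdealInOurSense {X : Type} (I : Set (Set X)) : Prop :=
  (∀ A ∈ I, ∀ B ⊆ A, B ∈ I) ∧
  (∀ A ∈ I, ∀ B ∈ I, A ∪ B ∈ I) ∧
  (∀ A : Set X, A.Finite → A ∈ I) ∧
  (∃ A ∈ I, A.Infinite) ∧
  (Set.univ : Set X) ∉ I

/-- The clone `C_I` induced by a collection of sets `I`: all operations mapping
powers of `I`-sets into `I`. -/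
def idealClone {X : Type} (I : Set (Set X)) : Set (Ops X) :=
  {f | ∀ A ∈ I, opImage f A ∈ I}

/-- The unary part `C_I^{(1)}` of the clone induced by `I`. -/
def unaryPart {X : Type} (I : Set (Set X)) : Set (X → X) :=
  {f | ∀ A ∈ I, f '' A ∈ I}

/-- A clone: a set of finitary operations containing all projections and closed
under composition. -/
def IsClone {X : Type} (C : Set (Ops X)) : Prop :=
  (∀ (n : ℕ) (i : Fin (n + 1)), (⟨n, fun x => x i⟩ : Ops X) ∈ C) ∧
  ∀ (n m : ℕ) (f : (Fin (n + 1) → X) → X) (g : Fin (n + 1) → (Fin (m + 1) → X) → X),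
    (⟨n, f⟩ : Ops X) ∈ C → (∀ i, (⟨m, g i⟩ : Ops X) ∈ C) →
    (⟨m, fun x => f fun i => g i x⟩ : Ops X) ∈ C

/-- The clone generated by a set of operations. -/
def cloneGen {X : Type} (F : Set (Ops X)) : Set (Ops X) :=
  ⋂₀ {C : Set (Ops X) | IsClone C ∧ F ⊆ C}

/-- A precomplete clone: a proper clone whose only proper cover is the full clone `O`. -/
def IsPrecompleteClone {X : Type} (C : Set (Ops X)) : Prop :=
  IsClone C ∧ C ≠ Set.univ ∧
  ∀ D : Set (Ops X), IsClone D → C ⊂ D → D = Set.univ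

/-- The regularization `Î` of `I`: all sets `A` such that every infinite subset
of `A` contains an infinite member of `I`. -/
def regularization {X : Type} (I : Set (Set X)) : Set (Set X) :=
  {A | ∀ B ⊆ A, B.Infinite → ∃ C ⊆ B, C.Infinite ∧ C ∈ I}

/-- Every set whose complement is in `I` can be mapped onto all of `X` by a
unary function in `C_I`. -/

lemma auxMain {X : Type} {I : Set (Set X)} (hI : IsIdealInOurSense I)
    {B S : Set X} (hSB : S ⊆ B) (g : X → X) (x₀ : X)
    (hcov : Set.univ ⊆ g '' S ∪ (B \ S))
    (hsmall : ∀ A ∈ I, g '' (A ∩ S) ∈ I) :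
    ∃ f : X → X, f '' B = Set.univ ∧ ∀ A ∈ I, f '' A ∈ I := by
  classical
  obtain ⟨hsub, hun, hfin, -, -⟩ := hI
  refine ⟨fun x => if x ∈ S then g x else if x ∈ B then x else x₀, ?_, ?_⟩
  · apply Set.eq_univ_of_univ_subset
    intro y _
    rcases hcov (Set.mem_univ y) with ⟨s, hs, rfl⟩ | hy
    · exact ⟨s, hSB hs, by simp [hs]⟩
    · exact ⟨y, hy.1, by simp [hy.2, hy.1]⟩
  · intro A hA
    have hU : g '' (A ∩ S) ∪ (A ∪ {x₀}) ∈ I := by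
      apply hun _ (hsmall A hA)
      exact hun _ hA _ (hfin _ (Set.finite_singleton x₀))
    apply hsub _ hU
    rintro y ⟨x, hx, rfl⟩
    by_cases hxS : x ∈ S
    · simp only [hxS, if_true]
      exact Or.inl ⟨x, ⟨hx, hxS⟩, rfl⟩
    · by_cases hxB : x ∈ B <;> simp [hxS, hxB, hx]

theorem stmt15 {X : Type} [Countable X] [Infinite X]
    {I : Set (Set X)} (hI : IsIdealInOurSense I)
    {B : Set X} (hB : Set.univ \ B ∈ I) :
    ∃ f : X → X, f '' B = Set.univ ∧ ∀ A ∈ I, f '' A ∈ I := by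
  classical
  have hsub := hI.1
  have hun := hI.2.1
  have hfin := hI.2.2.1
  have hX := hI.2.2.2.2
  have x₀ : X := Classical.arbitrary X
  have hBnI : B ∉ I := by
    intro hBI
    apply hX
    have := hun B hBI _ hB
    rwa [Set.union_diff_cancel (Set.subset_univ B)] at this
  have hBinf : B.Infinite := by
    by_contra hc
    exact hBnI (hfin B (Set.not_infinite.mp hc))
  by_cases h : ∃ S ∈ I, S ⊆ B ∧ S.Infinite
  · obtain ⟨S, hSI, hSB, hSinf⟩ := h
    haveI : Infinite ↥S := hSinf.to_subtype
    obtain ⟨e⟩ : Nonempty (ℕ ≃ ↥S) := nonempty_equiv_of_countable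
    obtain ⟨s, hs⟩ := hSinf.nonempty
    haveI : Nonempty ↥(S ∪ (Set.univ \ B)) := ⟨⟨s, Or.inl hs⟩⟩
    obtain ⟨σ, hσ⟩ := exists_surjective_nat ↥(S ∪ (Set.univ \ B))
    refine auxMain hI hSB (fun x => if h : x ∈ S then (σ (e.symm ⟨x, h⟩) : X) else x₀) x₀ ?_ ?_
    · intro y _
      by_cases hy : y ∈ S ∪ (Set.univ \ B)
      · obtain ⟨n, hn⟩ := hσ ⟨y, hy⟩
        exact Or.inl ⟨e n, (e n).2, by simp [(e n).2, hn]⟩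
      · refine Or.inr ⟨?_, fun hyS => hy (Or.inl hyS)⟩
        by_contra hyB
        exact hy (Or.inr ⟨trivial, hyB⟩)
    · intro A hA
      apply hsub _ (hun S hSI _ hB)
      rintro y ⟨x, ⟨hxA, hxS⟩, rfl⟩
      simp only [dif_pos hxS]
      exact (σ (e.symm ⟨x, hxS⟩)).2
  · push_neg at h
    haveI : Infinite ↥B := hBinf.to_subtype
    obtain ⟨e⟩ : Nonempty (ℕ ≃ ↥B) := nonempty_equiv_of_countable
    obtain ⟨τ, hτ⟩ := exists_surjective_nat X
    refine auxMain hI (subset_refl B) (fun x => if h : x ∈ B then τ (e.symm ⟨x, h⟩) else x₀) x₀ ?_ ?_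
    · intro y _
      obtain ⟨n, hn⟩ := hτ y
      exact Or.inl ⟨e n, (e n).2, by simp [(e n).2, hn]⟩
    · intro A hA
      have hABfin : (A ∩ B).Finite := by
        rw [← Set.not_infinite]
        exact Set.not_infinite.mpr (h _ (hsub A hA _ Set.inter_subset_left) Set.inter_subset_right)
      exact hfin _ (hABfin.image _)
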